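/- arXiv:2512.09528 — 4 statements merged into one kernel-verified Lean document; each statement's English description precedes it below -/
import Mathlib

section
/- Let Γ be a subgroup of isometries of the Poincaré disk 𝔻 acting properly discontinuously, with a compact fundamental domain D containing 0 of diameter δ₀, such that ⋃_{β∈Γ} β(D) = 𝔻. Suppose β₁,…,β_p ∈ Γ are such that the hyperbolic circle ∂𝔻_{δ₀+1} = {ξ : d_P(0,ξ) = δ₀+1} is covered by ⋃_{k=1}^p β_k(D). Then for every ξ ∈ 𝔻 with d_P(0,ξ) > δ₀ + 1, there exists k ∈ {1,…,p} with d_P(β_k(0), ξ) ≤ d_P(0,ξ) − 1. -/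
/-- The Poincaré (hyperbolic) distance on the open unit disk of `ℂ`. -/
noncomputable def poincareDist (a b : ℂ) : ℝ :=
  Real.log ((1 + ‖a - b‖ / ‖1 - (starRingEnd ℂ) a * b‖) /
            (1 - ‖a - b‖ / ‖1 - (starRingEnd ℂ) a * b‖))

/-- The open unit disk in `ℂ`. -/
def unitDisc : Set ℂ := {z : ℂ | ‖z‖ < 1}

/-- A self-map of the unit disk which is an isometry for the Poincaré distance. -/
def IsDiscIsometry (φ : ℂ → ℂ) : Prop :=
  Set.MapsTo φ unitDisc unitDisc ∧
    ∀ a ∈ unitDisc, ∀ b ∈ unitDisc, poincareDist (φ a) (φ b) = poincareDist a b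

/-- A set of self-maps of the disk forming a group of Poincaré isometries. -/
def IsIsometryGroup (Γ : Set (ℂ → ℂ)) : Prop :=
  (∀ φ ∈ Γ, IsDiscIsometry φ) ∧ id ∈ Γ ∧ (∀ φ ∈ Γ, ∀ ψ ∈ Γ, φ ∘ ψ ∈ Γ) ∧
    ∀ φ ∈ Γ, ∃ ψ ∈ Γ, (∀ z ∈ unitDisc, ψ (φ z) = z) ∧ ∀ z ∈ unitDisc, φ (ψ z) = z

/-- Properly discontinuous action on the unit disk. -/
def ProperlyDiscontinuous (Γ : Set (ℂ → ℂ)) : Prop :=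
  ∀ K : Set ℂ, K ⊆ unitDisc → IsCompact K → {φ : ℂ → ℂ | φ ∈ Γ ∧ (φ '' K ∩ K).Nonempty}.Finite

lemma ident (a b : ℂ) : ‖1 - (starRingEnd ℂ) a * b‖^2 =
    ‖a-b‖^2 + (1 - ‖a‖^2)*(1 - ‖b‖^2) := by
  rw [Complex.sq_norm, Complex.sq_norm, Complex.sq_norm, Complex.sq_norm]
  simp only [Complex.normSq_apply, Complex.sub_re, Complex.sub_im, Complex.mul_re,
    Complex.mul_im, Complex.conj_re, Complex.conj_im, Complex.one_re, Complex.one_im]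
  ring

lemma denom_pos {a b : ℂ} (ha : a ∈ unitDisc) (hb : b ∈ unitDisc) :
    0 < ‖1 - (starRingEnd ℂ) a * b‖ := by
  have h := ident a b
  have ha' : ‖a‖ < 1 := ha
  have hb' : ‖b‖ < 1 := hb
  have h0a := norm_nonneg a
  have h0b := norm_nonneg b
  have p1 : 0 < 1 - ‖a‖ ^ 2 := by nlinarith
  have p2 : 0 < 1 - ‖b‖ ^ 2 := by nlinarith
  rcases lt_or_ge 0 (‖1 - (starRingEnd ℂ) a * b‖) with h'|h'
  · exact h'
  · exfalso
    have hB0 : ‖1 - (starRingEnd ℂ) a * b‖ = 0 :=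
      le_antisymm h' (norm_nonneg _)
    rw [hB0] at h
    nlinarith [sq_nonneg (‖a-b‖), mul_pos p1 p2]

lemma num_lt_denom {a b : ℂ} (ha : a ∈ unitDisc) (hb : b ∈ unitDisc) :
    ‖a - b‖ < ‖1 - (starRingEnd ℂ) a * b‖ := by
  have h := ident a b
  have ha' : ‖a‖ < 1 := ha
  have hb' : ‖b‖ < 1 := hb
  have h0a := norm_nonneg a
  have h0b := norm_nonneg b
  have p1 : 0 < 1 - ‖a‖ ^ 2 := by nlinarith
  have p2 : 0 < 1 - ‖b‖ ^ 2 := by nlinarith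
  have hA := norm_nonneg (a-b)
  have hB := norm_nonneg (1 - (starRingEnd ℂ) a * b)
  nlinarith [mul_pos p1 p2]

lemma pd_eq (a b : ℂ) : poincareDist a b =
    Real.log ((1 + ‖a - b‖ / ‖1 - (starRingEnd ℂ) a * b‖) /
      (1 - ‖a - b‖ / ‖1 - (starRingEnd ℂ) a * b‖)) := rfl

lemma pd_zero_left (z : ℂ) : poincareDist 0 z =
    Real.log ((1 + ‖z‖) / (1 - ‖z‖)) := by
  simp [poincareDist, zero_sub, norm_neg]

lemma L_mono {x y : ℝ} (hx : 0 ≤ x) (h : x ≤ y) (hy : y < 1) :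
    Real.log ((1+x)/(1-x)) ≤ Real.log ((1+y)/(1-y)) := by
  have h1 : (0:ℝ) < 1 - x := by linarith
  have h2 : (0:ℝ) < 1 - y := by linarith
  apply Real.log_le_log (by positivity)
  rw [div_le_div_iff₀ h1 h2]
  nlinarith

lemma L_val (c : ℝ) (hc : 0 < c) :
    Real.log ((1 + (Real.exp c - 1)/(Real.exp c + 1)) / (1 - (Real.exp c - 1)/(Real.exp c + 1))) = c := by
  have he : (0:ℝ) < Real.exp c + 1 := by positivity
  have : (1 + (Real.exp c - 1)/(Real.exp c + 1)) / (1 - (Real.exp c - 1)/(Real.exp c + 1)) = Real.exp c := by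
    field_simp
    ring
  rw [this, Real.log_exp]

lemma step {s t A B : ℝ} (hs : 0 ≤ s) (hs1 : s < 1) (ht : 0 ≤ t) (ht1 : t < 1)
    (hB : 0 < B) (hA : 0 ≤ A) (hAB : A < B) (key : (t - s) * B ≤ A * (1 - s*t)) :
    (1+t)/(1-t) ≤ (1+s)/(1-s) * ((1 + A/B)/(1 - A/B)) := by
  have hρ1 : A/B < 1 := (div_lt_one hB).2 hAB
  have hρ0 : 0 ≤ A/B := div_nonneg hA hB.le
  rw [div_mul_div_comm, div_le_div_iff₀ (by linarith) (by nlinarith)]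
  have key' : (t - s) ≤ (A/B)*(1-s*t) := by
    rw [div_mul_eq_mul_div, le_div_iff₀ hB]; nlinarith [key]
  nlinarith [key']

lemma tri0 (b c : ℂ) (hb : b ∈ unitDisc) (hc : c ∈ unitDisc) :
    poincareDist 0 c ≤ poincareDist 0 b + poincareDist b c := by
  set s := ‖b‖ with hs
  set t := ‖c‖ with ht
  set A := ‖b - c‖ with hA
  set B := ‖1 - (starRingEnd ℂ) b * c‖ with hB
  have hs0 : 0 ≤ s := norm_nonneg b
  have ht0 : 0 ≤ t := norm_nonneg c
  have hs1 : s < 1 := hb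
  have ht1 : t < 1 := hc
  have hBpos : 0 < B := denom_pos hb hc
  have hA0 : 0 ≤ A := norm_nonneg _
  have hABlt : A < B := num_lt_denom hb hc
  have hid : B^2 = A^2 + (1 - s^2)*(1 - t^2) := ident b c
  have hts : t - s ≤ A := by
    have := norm_sub_norm_le c b
    have hAcb : ‖c - b‖ = A := by rw [hA, norm_sub_rev]
    rw [hAcb] at this
    exact this
  have key : (t - s) * B ≤ A * (1 - s*t) := by
    rcases le_or_gt t s with h | h
    · have hst : (0:ℝ) ≤ 1 - s*t := by nlinarith
      have hn : (t-s)*B ≤ 0 := mul_nonpos_of_nonpos_of_nonneg (by linarith) hBpos.le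
      nlinarith [mul_nonneg hA0 hst]
    · have h1 : 0 ≤ t - s := by linarith
      have hsq : ((t-s)*B)^2 ≤ (A*(1-s*t))^2 := by
        nlinarith [mul_nonneg (mul_nonneg (by nlinarith : (0:ℝ) ≤ 1 - s^2) (by nlinarith : (0:ℝ) ≤ 1 - t^2)) (by nlinarith : (0:ℝ) ≤ A^2 - (t-s)^2)]
      nlinarith [mul_nonneg h1 hBpos.le, mul_nonneg hA0 (by nlinarith : (0:ℝ) ≤ 1 - s*t)]
  rw [pd_zero_left, pd_zero_left, pd_eq]
  rw [← ht, ← hs, ← hA, ← hB]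
  have hρ1 : A/B < 1 := (div_lt_one hBpos).2 hABlt
  have hρ0 : 0 ≤ A/B := div_nonneg hA0 hBpos.le
  have h1 : (0:ℝ) < (1+s)/(1-s) := by apply div_pos <;> linarith
  have h2 : (0:ℝ) < (1 + A/B)/(1 - A/B) := by apply div_pos <;> linarith
  have h3 : (0:ℝ) < (1+t)/(1-t) := by apply div_pos <;> linarith
  rw [← Real.log_mul (ne_of_gt h1) (ne_of_gt h2)]
  exact Real.log_le_log h3 (step hs0 hs1 ht0 ht1 hBpos hA0 hABlt key)

lemma radial {ξ : ℂ} (hξ : ξ ∈ unitDisc) {r : ℝ} (hr0 : 0 < r) (hrt : r ≤ ‖ξ‖) :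
    poincareDist (((r / ‖ξ‖ : ℝ) : ℂ) * ξ) ξ =
      Real.log ((1 + ‖ξ‖)/(1 - ‖ξ‖)) - Real.log ((1+r)/(1-r)) := by
  set t := ‖ξ‖ with htdef
  have ht0 : 0 < t := lt_of_lt_of_le hr0 hrt
  have ht1 : t < 1 := hξ
  have hr1 : r < 1 := lt_of_le_of_lt hrt ht1
  have htne : (t:ℝ) ≠ 0 := ne_of_gt ht0
  have htneC : (t:ℂ) ≠ 0 := Complex.ofReal_ne_zero.2 htne
  have hrt1 : r * t < 1 := by nlinarith
  -- numerator
  have hnum : ‖((r / t : ℝ) : ℂ) * ξ - ξ‖ = t - r := by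
    have e : ((r / t : ℝ) : ℂ) * ξ - ξ = ((r / t - 1 : ℝ) : ℂ) * ξ := by
      push_cast; ring
    rw [e, norm_mul, Complex.norm_real, Real.norm_eq_abs, ← htdef]
    have h1 : r / t - 1 ≤ 0 := by rw [sub_nonpos, div_le_one ht0]; exact hrt
    rw [abs_of_nonpos h1]
    field_simp
    ring
  -- denominator
  have hden : ‖1 - (starRingEnd ℂ) (((r / t : ℝ) : ℂ) * ξ) * ξ‖ = 1 - r * t := by
    have e : (starRingEnd ℂ) (((r / t : ℝ) : ℂ) * ξ) * ξ
        = ((r / t : ℝ) : ℂ) * ((starRingEnd ℂ) ξ * ξ) := by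
      rw [map_mul, Complex.conj_ofReal]; ring
    have e2 : (starRingEnd ℂ) ξ * ξ = ((t^2 : ℝ) : ℂ) := by
      rw [mul_comm, Complex.mul_conj, Complex.normSq_eq_norm_sq, ← htdef]
      try push_cast
      try ring
    rw [e, e2]
    have e3 : (1 : ℂ) - ((r / t : ℝ) : ℂ) * ((t^2 : ℝ) : ℂ) = ((1 - r * t : ℝ) : ℂ) := by
      try push_cast
      field_simp
      try ring
    rw [e3, Complex.norm_real, Real.norm_eq_abs, abs_of_pos (by linarith)]
  rw [poincareDist, hnum, hden]
  have hne1 : (1 - r*t) ≠ 0 := by linarith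
  have hne2 : (1 - t) ≠ 0 := by linarith
  have hne3 : (1 - r) ≠ 0 := by linarith
  have hXden : (0:ℝ) < 1 - r*t := by linarith
  have hXnum : 1 - r*t - (t - r) = (1+r)*(1-t) := by ring
  have hX : 1 - (t - r)/(1 - r*t) = ((1+r)*(1-t))/(1 - r*t) := by
    rw [eq_div_iff hne1, sub_mul, div_mul_cancel₀ _ hne1]; linarith [hXnum]
  have hXne : 1 - (t - r)/(1 - r*t) ≠ 0 := by
    rw [hX]
    exact ne_of_gt (div_pos (by nlinarith) hXden)
  have harg : (1 + (t - r)/(1 - r*t)) / (1 - (t - r)/(1 - r*t))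
      = ((1+t)/(1-t)) / ((1+r)/(1-r)) := by
    rw [hX]
    rw [div_div_div_eq, div_eq_div_iff (by positivity) (by nlinarith [mul_pos (show (0:ℝ) < 1+r by linarith) (show (0:ℝ) < 1-t by linarith)])]
    field_simp [show (1:ℝ) - t*r ≠ 0 by linarith [mul_comm r t]]
    ring
  rw [harg, Real.log_div (ne_of_gt (div_pos (by linarith) (by linarith)))
    (ne_of_gt (div_pos (by linarith) (by linarith)))]

/-- if `β₁,…,β_p` cover the hyperbolic circle of radius `δ₀+1` by copies of
the fundamental domain `D`, then any point at distance `> δ₀+1` from `0` is at distance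
at most `d_P(0,ξ) − 1` from some `β_k(0)`. -/
theorem stmt2 (Γ : Set (ℂ → ℂ)) (hΓ : IsIsometryGroup Γ)
    (hΓpd : ProperlyDiscontinuous Γ)
    (D : Set ℂ) (hDcpt : IsCompact D) (hDsub : D ⊆ unitDisc) (h0D : (0 : ℂ) ∈ D)
    (δ₀ : ℝ) (hδ₀ : ∀ ζ ∈ D, ∀ ζ' ∈ D, poincareDist ζ ζ' ≤ δ₀)
    (hcover : ∀ z ∈ unitDisc, ∃ β ∈ Γ, z ∈ β '' D)
    (p : ℕ) (β : Fin p → (ℂ → ℂ)) (hβ : ∀ k, β k ∈ Γ)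
    (hβcover : {ξ : ℂ | ξ ∈ unitDisc ∧ poincareDist 0 ξ = δ₀ + 1} ⊆
      ⋃ k : Fin p, β k '' D) :
    ∀ ξ ∈ unitDisc, poincareDist 0 ξ > δ₀ + 1 →
      ∃ k : Fin p, poincareDist (β k 0) ξ ≤ poincareDist 0 ξ - 1 := by
  intro ξ hξ hfar
  have h0disc : (0:ℂ) ∈ unitDisc := by
    simp [unitDisc]
  -- δ₀ ≥ 0
  have hδ0 : 0 ≤ δ₀ := by
    have h := hδ₀ 0 h0D 0 h0D
    have : poincareDist 0 0 = 0 := by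
      rw [pd_zero_left]; simp
    linarith
  set c := δ₀ + 1 with hcdef
  have hc0 : 0 < c := by linarith
  set r := (Real.exp c - 1)/(Real.exp c + 1) with hrdef
  have hexp1 : 1 < Real.exp c := by
    have := Real.exp_lt_exp.2 hc0
    rwa [Real.exp_zero] at this
  have hr0 : 0 < r := div_pos (by linarith) (by linarith)
  have hr1 : r < 1 := by
    rw [div_lt_one (by linarith)]; linarith
  have hLr : Real.log ((1 + r)/(1 - r)) = c := L_val c hc0
  set t := ‖ξ‖ with htdef
  have ht1 : t < 1 := hξ
  have hpd0ξ : poincareDist 0 ξ = Real.log ((1+t)/(1-t)) := pd_zero_left ξ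
  -- r ≤ t
  have hrt : r ≤ t := by
    by_contra hcon
    push_neg at hcon
    have := L_mono (norm_nonneg ξ) (le_of_lt hcon) hr1
    rw [hLr] at this
    rw [hpd0ξ] at hfar
    linarith
  -- the intermediate point
  set ξ₁ : ℂ := ((r / t : ℝ) : ℂ) * ξ with hξ₁def
  have ht0 : 0 < t := lt_of_lt_of_le hr0 hrt
  have hξ₁abs : ‖ξ₁‖ = r := by
    rw [hξ₁def, norm_mul, Complex.norm_real, Real.norm_eq_abs, ← htdef,
      abs_of_pos (div_pos hr0 ht0)]
    field_simp
  have hξ₁disc : ξ₁ ∈ unitDisc := by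
    simp only [unitDisc, Set.mem_setOf_eq, hξ₁abs]; exact hr1
  have hξ₁circ : poincareDist 0 ξ₁ = δ₀ + 1 := by
    rw [pd_zero_left, hξ₁abs, hLr]
  -- ξ₁ lies in some β k '' D
  have hmem : ξ₁ ∈ ⋃ k : Fin p, β k '' D := hβcover ⟨hξ₁disc, hξ₁circ⟩
  rw [Set.mem_iUnion] at hmem
  obtain ⟨k, ζ, hζD, hζ⟩ := hmem
  refine ⟨k, ?_⟩
  have hζdisc : ζ ∈ unitDisc := hDsub hζD
  have hiso : IsDiscIsometry (β k) := hΓ.1 (β k) (hβ k)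
  obtain ⟨ψ, hψΓ, hψl, hψr⟩ := hΓ.2.2.2 (β k) (hβ k)
  have hψiso : IsDiscIsometry ψ := hΓ.1 ψ hψΓ
  have hβk0 : β k 0 ∈ unitDisc := hiso.1 h0disc
  -- distance from β k 0 to ξ₁
  have d1 : poincareDist (β k 0) ξ₁ ≤ δ₀ := by
    rw [← hζ, hiso.2 0 h0disc ζ hζdisc]
    exact hδ₀ 0 h0D ζ hζD
  -- radial additivity
  have d2 : poincareDist ξ₁ ξ = poincareDist 0 ξ - c := by
    have h := radial hξ hr0 hrt
    rw [← htdef] at h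
    rw [hξ₁def, h, hpd0ξ, hLr]
  -- triangle inequality via ψ
  have e0 : ψ (β k 0) = 0 := hψl 0 h0disc
  have hψξ : ψ ξ ∈ unitDisc := hψiso.1 hξ
  have hψξ₁ : ψ ξ₁ ∈ unitDisc := hψiso.1 hξ₁disc
  have tA : poincareDist (β k 0) ξ = poincareDist 0 (ψ ξ) := by
    rw [← hψiso.2 (β k 0) hβk0 ξ hξ, e0]
  have tB : poincareDist (β k 0) ξ₁ = poincareDist 0 (ψ ξ₁) := by
    rw [← hψiso.2 (β k 0) hβk0 ξ₁ hξ₁disc, e0]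
  have tC : poincareDist ξ₁ ξ = poincareDist (ψ ξ₁) (ψ ξ) :=
    (hψiso.2 ξ₁ hξ₁disc ξ hξ).symm
  have tri := tri0 (ψ ξ₁) (ψ ξ) hψξ₁ hψξ
  rw [← tA, ← tB, ← tC] at tri
  rw [d2] at tri
  linarith
end

section
/- Let f be a homeomorphism of a compact metric space T and ν an ergodic f-invariant measure. Suppose for every δ > 0 there exists ε > 0 such that the sequence a_n = ν{t ∈ T : ν(B_n^f(t,ε)) > exp(−(h_ν(f)−δ)n)} is summable, where B_n^f(t,ε) is the one-sided Bowen ball. Then for ν-almost every t, sup_{ε>0} liminf_{n→∞} −(1/n) log ν(B_n^{f,±}(t,ε)) ≥ 2·h_ν(f), where B_n^{f,±} is the two-sided Bowen ball. -/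
open Filter MeasureTheory
open scoped ENNReal

variable {T : Type*} [MetricSpace T] [CompactSpace T] [MeasurableSpace T] [BorelSpace T]

/-- A finite measurable partition of `T`, encoded by the map sending a point to the
element of the partition containing it. -/
structure FinMeasPartition (T : Type*) [MeasurableSpace T] where
  part : T → Set T
  mem_part : ∀ x, x ∈ part x
  measSet : ∀ x, MeasurableSet (part x)
  part_eq : ∀ x y, y ∈ part x → part y = part x
  finite_range : (Set.range part).Finite

/-- One-sided cell: the element of `⋁_{i=0}^{n-1} f^{-i} ξ` containing `x`. -/
def oneSidedCell (f : Equiv.Perm T) (P : FinMeasPartition T) (n : ℕ) (x : T) : Set T :=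
  {y : T | ∀ i : ℕ, i < n → (f ^ i) y ∈ P.part ((f ^ i) x)}

/-- Two-sided cell: the element of `⋁_{i=-n}^{n} f^{-i} ξ` containing `x`. -/
def twoSidedCell (f : Equiv.Perm T) (P : FinMeasPartition T) (n : ℕ) (x : T) : Set T :=
  {y : T | ∀ i : ℤ, |i| ≤ (n : ℤ) → (f ^ i) y ∈ P.part ((f ^ i) x)}

/-- Entropy of `f` with respect to the partition `P` and measure `ν`, defined via
`(1/n) H_ν(⋁_{i=0}^{n-1} f^{-i} ξ)` with `H_ν(η) = ∫ -log ν(cell_η(x)) dν(x)`. -/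
noncomputable def partitionEntropy (f : Equiv.Perm T) (ν : Measure T)
    (P : FinMeasPartition T) : ℝ :=
  Filter.liminf (fun n : ℕ =>
    (∫ x, -Real.log (ν (oneSidedCell f P n x)).toReal ∂ν) / n) Filter.atTop

/-- Kolmogorov–Sinai entropy `h_ν(f)`, as a supremum over finite measurable partitions. -/
noncomputable def ksEntropy (f : Equiv.Perm T) (ν : Measure T) : ℝ≥0∞ :=
  ⨆ P : FinMeasPartition T, ENNReal.ofReal (partitionEntropy f ν P)

/-- One-sided Bowen ball `B_n^f(t,ε)`. -/
def oneSidedBall (f : Equiv.Perm T) (n : ℕ) (t : T) (ε : ℝ) : Set T :=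
  {s : T | ∀ i : ℕ, i ≤ n → dist ((f ^ i) t) ((f ^ i) s) < ε}

/-- Two-sided Bowen ball `B_n^{f,±}(t,ε)`. -/
def twoSidedBall (f : Equiv.Perm T) (n : ℕ) (t : T) (ε : ℝ) : Set T :=
  {s : T | ∀ i : ℤ, |i| ≤ (n : ℤ) → dist ((f ^ i) t) ((f ^ i) s) < ε}


section BrinKatokAux

variable {T : Type*} [MetricSpace T] [CompactSpace T] [MeasurableSpace T] [BorelSpace T]

omit [CompactSpace T] [MeasurableSpace T] [BorelSpace T] in
lemma bk_zpow_apply_symm (f : Equiv.Perm T) (n j : ℕ) (y : T) :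
    (f ^ (j:ℤ)) ((f.symm ^ n) y) = (f ^ ((j:ℤ) - (n:ℤ))) y := by
  have h1 : (f.symm ^ n : Equiv.Perm T) = f ^ (-(n:ℤ)) := by
    rw [zpow_neg, zpow_natCast, ← inv_pow]; rfl
  rw [h1, ← Equiv.Perm.mul_apply, ← zpow_add, ← sub_eq_add_neg]

omit [CompactSpace T] [MeasurableSpace T] [BorelSpace T] in
lemma bk_twoBall_subset (f : Equiv.Perm T) (n : ℕ) (t : T) (ε : ℝ) :
    twoSidedBall f n t ε ⊆
      (⇑(f.symm ^ n)) ⁻¹' oneSidedBall f (2*n) ((f.symm ^ n) t) ε := by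
  intro s hs
  simp only [Set.mem_preimage, oneSidedBall, Set.mem_setOf_eq]
  intro j hj
  have hjz : ∀ y : T, (f ^ j) ((f.symm ^ n) y) = (f ^ ((j:ℤ) - (n:ℤ))) y := by
    intro y; rw [← zpow_natCast f j]; exact bk_zpow_apply_symm f n j y
  rw [hjz, hjz]
  exact hs _ (by rw [abs_le]; omega)

lemma bk_preimage_measure (f : Equiv.Perm T) (hf : Continuous f) (hf' : Continuous f.symm)
    (ν : Measure T) (hmp : MeasurePreserving (⇑f) ν ν) (n : ℕ) (G : Set T) :
    ν ((⇑(f.symm ^ n)) ⁻¹' G) = ν G := by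
  set e : T ≃ᵐ T := (Homeomorph.mk f hf hf').toMeasurableEquiv with he
  have hm : MeasurePreserving (⇑e) ν ν := hmp
  have base : ∀ G : Set T, ν ((⇑f.symm) ⁻¹' G) = ν G := by
    intro G
    have h1 : ν ((⇑e.symm) ⁻¹' G) = (ν.map e.symm) G := (e.symm.map_apply G).symm
    rw [(hm.symm e).map_eq] at h1
    exact h1.symm ▸ rfl
  induction n with
  | zero => simp
  | succ n ih =>
    rw [pow_succ]
    have h2 : (⇑(f.symm ^ n * f.symm)) ⁻¹' G = ⇑f.symm ⁻¹' ((⇑(f.symm ^ n)) ⁻¹' G) := by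
      ext x; simp [Equiv.Perm.mul_apply]
    rw [h2, base, ih]

omit [CompactSpace T] [MeasurableSpace T] [BorelSpace T] in
lemma bk_cont_zpow (f : Equiv.Perm T) (hf : Continuous f) (hf' : Continuous f.symm) (i : ℤ) :
    Continuous ⇑(f ^ i) := by
  induction i using Int.induction_on with
  | zero => simpa using continuous_id
  | succ m ih =>
    have h1 : f ^ ((m:ℤ)+1) = f ^ (m:ℤ) * f := by rw [zpow_add_one]
    have h2 : ⇑(f ^ (m:ℤ) * f) = ⇑(f ^ (m:ℤ)) ∘ ⇑f := rfl
    rw [h1, h2]; exact ih.comp hf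
  | pred m ih =>
    have h1 : f ^ (-(m:ℤ)-1) = f ^ (-(m:ℤ)) * f⁻¹ := by rw [zpow_sub_one]
    have h2 : ⇑(f ^ (-(m:ℤ)) * f⁻¹) = ⇑(f ^ (-(m:ℤ))) ∘ ⇑f.symm := rfl
    rw [h1, h2]; exact ih.comp hf'

omit [CompactSpace T] [MeasurableSpace T] [BorelSpace T] in
lemma bk_twoBall_nhds (f : Equiv.Perm T) (hf : Continuous f) (hf' : Continuous f.symm)
    (n : ℕ) (t : T) {ε : ℝ} (hε : 0 < ε) : twoSidedBall f n t ε ∈ nhds t := by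
  have heq : twoSidedBall f n t ε =
      ⋂ i ∈ Finset.Icc (-(n:ℤ)) (n:ℤ), (⇑(f ^ i)) ⁻¹' Metric.ball ((f ^ i) t) ε := by
    ext s
    simp only [twoSidedBall, Set.mem_setOf_eq, Set.mem_iInter, Finset.mem_Icc, Set.mem_preimage,
      Metric.mem_ball]
    constructor
    · intro h i hi; rw [dist_comm]; exact h i (abs_le.2 hi)
    · intro h i hi; rw [dist_comm]; exact h i (abs_le.1 hi)
  rw [heq]
  refine Filter.biInter_finset_mem _ |>.2 fun i _ => ?_
  exact (bk_cont_zpow f hf hf' i).continuousAt.preimage_mem_nhds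
    (Metric.ball_mem_nhds _ hε)

omit [BorelSpace T] in
lemma bk_ae_nhds_pos (ν : Measure T) [IsProbabilityMeasure ν] :
    ∀ᵐ t ∂ν, ∀ u ∈ nhds t, 0 < ν u := by
  have hN0 : ν {x | ∃ u ∈ nhds x, ν u = 0} = 0 := by
    apply measure_null_of_locally_null
    rintro x ⟨u, hu, hu0⟩
    exact ⟨u, mem_nhdsWithin_of_mem_nhds hu, hu0⟩
  rw [MeasureTheory.ae_iff]
  refine measure_mono_null (fun a ha => ?_) hN0
  simp only [Set.mem_setOf_eq, not_forall] at ha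
  obtain ⟨u, hu, hpos⟩ := ha
  exact ⟨u, hu, le_antisymm (not_lt.1 hpos) zero_le⟩

end BrinKatokAux

/-- lower bound in the two-sided Brin–Katok theorem, under the
summability hypothesis for one-sided Bowen balls: for ν-a.e. `t`,
`sup_{ε>0} liminf_n −(1/n) log ν(B_n^{f,±}(t,ε)) ≥ 2·h_ν(f)`. -/
theorem stmt13 (f : Equiv.Perm T) (hf : Continuous f) (hf' : Continuous f.symm)
    (ν : Measure T) [IsProbabilityMeasure ν] (herg : Ergodic (⇑f) ν)
    (hsum : ∀ δ : ℝ, 0 < δ → ∃ ε : ℝ, 0 < ε ∧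
      Summable (fun n : ℕ =>
        (ν {t : T | ν (oneSidedBall f n t ε) >
          ENNReal.ofReal (Real.exp (-((ksEntropy f ν).toReal - δ) * n))}).toReal)) :
    ∀ᵐ t ∂ν,
      ((2 * (ksEntropy f ν).toReal : ℝ) : EReal) ≤
        ⨆ ε : {e : ℝ // 0 < e}, Filter.liminf
          (fun n : ℕ => ((-Real.log (ν (twoSidedBall f n t ε)).toReal / n : ℝ) : EReal))
          Filter.atTop := by
  classical
  have hδpos : ∀ k : ℕ, (0:ℝ) < 1/((k:ℝ)+1) := fun k => by positivity
  choose ε hεpos hεsum using fun k : ℕ => hsum (1/((k:ℝ)+1)) (hδpos k)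
  set h : ℝ := (ksEntropy f ν).toReal with hh
  have hpre : ∀ (n : ℕ) (G : Set T), ν ((⇑(f.symm ^ n)) ⁻¹' G) = ν G :=
    fun n G => bk_preimage_measure f hf hf' ν herg.toMeasurePreserving n G
  have hbad : ∀ k : ℕ, ∀ᵐ t ∂ν, ∀ᶠ n in Filter.atTop,
      ν (twoSidedBall f n t (ε k)) ≤
        ENNReal.ofReal (Real.exp (-(h - 1/((k:ℝ)+1)) * ((2*n : ℕ):ℝ))) := by
    intro k
    set Bad : ℕ → Set T := fun n =>
      {t | ENNReal.ofReal (Real.exp (-(h - 1/((k:ℝ)+1)) * ((2*n : ℕ):ℝ))) <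
        ν (twoSidedBall f n t (ε k))} with hBadDef
    have hsubset : ∀ n : ℕ, Bad n ⊆ (⇑(f.symm ^ n)) ⁻¹'
        {t : T | ν (oneSidedBall f (2*n) t (ε k)) >
          ENNReal.ofReal (Real.exp (-(h - 1/((k:ℝ)+1)) * ((2*n : ℕ) : ℝ)))} := by
      intro n t ht
      simp only [Set.mem_preimage, Set.mem_setOf_eq, gt_iff_lt]
      calc ENNReal.ofReal (Real.exp (-(h - 1/((k:ℝ)+1)) * ((2*n : ℕ) : ℝ)))
          < ν (twoSidedBall f n t (ε k)) := ht
        _ ≤ ν ((⇑(f.symm ^ n)) ⁻¹' oneSidedBall f (2*n) ((f.symm ^ n) t) (ε k)) :=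
            measure_mono (bk_twoBall_subset f n t (ε k))
        _ = ν (oneSidedBall f (2*n) ((f.symm ^ n) t) (ε k)) := hpre n _
    have hsum2 : Summable (fun n : ℕ =>
        (ν {t : T | ν (oneSidedBall f (2*n) t (ε k)) >
          ENNReal.ofReal (Real.exp (-(h - 1/((k:ℝ)+1)) * ((2*n : ℕ) : ℝ)))}).toReal) :=
      (hεsum k).comp_injective (fun a b hab => by omega)
    have htop : ∑' n, ν (Bad n) ≠ ⊤ := by
      have hle : ∀ n : ℕ, ν (Bad n) ≤ ENNReal.ofReal
          ((ν {t : T | ν (oneSidedBall f (2*n) t (ε k)) >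
            ENNReal.ofReal (Real.exp (-(h - 1/((k:ℝ)+1)) * ((2*n : ℕ) : ℝ)))}).toReal) := by
        intro n
        rw [ENNReal.ofReal_toReal (measure_ne_top ν _)]
        exact (measure_mono (hsubset n)).trans (le_of_eq (hpre n _))
      refine ne_top_of_le_ne_top ?_ (ENNReal.tsum_le_tsum hle)
      rw [← ENNReal.ofReal_tsum_of_nonneg (fun n => ENNReal.toReal_nonneg) hsum2]
      exact ENNReal.ofReal_ne_top
    have hlimsup : ν (Filter.limsup Bad Filter.atTop) = 0 :=
      measure_limsup_atTop_eq_zero htop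
    have hae : ∀ᵐ t ∂ν, t ∉ Filter.limsup Bad Filter.atTop := by
      rw [MeasureTheory.ae_iff]; simpa using hlimsup
    filter_upwards [hae] with t ht
    rw [Filter.mem_limsup_iff_frequently_mem] at ht
    exact (Filter.not_frequently.mp ht).mono fun n hn => not_lt.1 hn
  filter_upwards [bk_ae_nhds_pos ν, (MeasureTheory.ae_all_iff).2 hbad] with t htpos htk
  have hSk : ∀ k : ℕ, ((2*(h - 1/((k:ℝ)+1)) : ℝ) : EReal) ≤
      ⨆ ε : {e : ℝ // 0 < e}, Filter.liminf
        (fun n : ℕ => ((-Real.log (ν (twoSidedBall f n t ε)).toReal / n : ℝ) : EReal))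
        Filter.atTop := by
    intro k
    have hev : ∀ᶠ n in Filter.atTop, ((2*(h - 1/((k:ℝ)+1)) : ℝ) : EReal) ≤
        ((-Real.log (ν (twoSidedBall f n t (ε k))).toReal / n : ℝ) : EReal) := by
      filter_upwards [htk k, Filter.eventually_ge_atTop 1] with n hn hn1
      rw [EReal.coe_le_coe_iff]
      have hpos : 0 < ν (twoSidedBall f n t (ε k)) :=
        htpos _ (bk_twoBall_nhds f hf hf' n t (hεpos k))
      have hxpos : 0 < (ν (twoSidedBall f n t (ε k))).toReal :=
        ENNReal.toReal_pos hpos.ne' (measure_ne_top ν _)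
      have hxle : (ν (twoSidedBall f n t (ε k))).toReal ≤
          Real.exp (-(h - 1/((k:ℝ)+1)) * ((2*n : ℕ):ℝ)) := by
        have h2 := ENNReal.toReal_mono ENNReal.ofReal_ne_top hn
        rwa [ENNReal.toReal_ofReal (Real.exp_nonneg _)] at h2
      have hlog : Real.log (ν (twoSidedBall f n t (ε k))).toReal ≤
          -(h - 1/((k:ℝ)+1)) * ((2*n : ℕ):ℝ) := by
        have h3 := Real.log_le_log hxpos hxle
        rwa [Real.log_exp] at h3
      have hn0 : (0:ℝ) < (n:ℝ) := by exact_mod_cast hn1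
      rw [le_div_iff₀ hn0]
      push_cast at hlog ⊢
      nlinarith [hlog]
    calc ((2*(h - 1/((k:ℝ)+1)) : ℝ) : EReal)
        = Filter.liminf (fun _ : ℕ => ((2*(h - 1/((k:ℝ)+1)) : ℝ) : EReal)) Filter.atTop :=
          (Filter.liminf_const _).symm
      _ ≤ Filter.liminf
          (fun n : ℕ => ((-Real.log (ν (twoSidedBall f n t (ε k))).toReal / n : ℝ) : EReal))
          Filter.atTop := Filter.liminf_le_liminf hev
      _ ≤ _ := le_iSup (fun e : {e : ℝ // 0 < e} => Filter.liminf
          (fun n : ℕ => ((-Real.log (ν (twoSidedBall f n t (e : ℝ))).toReal / n : ℝ) : EReal))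
          Filter.atTop) ⟨ε k, hεpos k⟩
  have h1 : Filter.Tendsto (fun k : ℕ => 2*(h - 1/((k:ℝ)+1))) Filter.atTop (nhds (2*h)) := by
    simpa using
      ((tendsto_const_nhds (x := h)).sub tendsto_one_div_add_atTop_nhds_zero_nat).const_mul 2
  have htend : Filter.Tendsto (fun k : ℕ => ((2*(h - 1/((k:ℝ)+1)) : ℝ) : EReal))
      Filter.atTop (nhds ((2*h : ℝ) : EReal)) := EReal.tendsto_coe.2 h1
  exact le_of_tendsto htend (Filter.Eventually.of_forall hSk)
end

section
/- In the Poincaré disk, let ε > 0 be sufficiently small, θ ∈ [−π, π], and ξ ∈ 𝔻 with R = d_P(0,ξ) sufficiently large. If e^{−R} ≥ 8 ε⁻¹ |sin(θ/2)|, then d_P(ξ, e^{iθ}ξ) ≤ ε; and if e^{−R} ≤ (1/4) ε⁻¹ |sin(θ/2)|, then d_P(ξ, e^{iθ}ξ) ≥ ε. -/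
lemma aux_cos (θ : ℝ) : Real.cos θ = 1 - 2 * Real.sin (θ/2)^2 := by
  have h := Real.cos_two_mul' (θ/2)
  have h' := Real.sin_sq_add_cos_sq (θ/2)
  have e : 2 * (θ/2) = θ := by ring
  rw [e] at h; nlinarith

lemma aux_abs_one_sub_exp (θ : ℝ) :
    ‖1 - Complex.exp (θ * Complex.I)‖ = 2 * |Real.sin (θ / 2)| := by
  have h2 := aux_cos θ
  have h3 := Real.sin_sq_add_cos_sq θ
  have h1 : ‖1 - Complex.exp (θ * Complex.I)‖^2 = (2 * |Real.sin (θ/2)|)^2 := by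
    rw [Complex.sq_norm, Complex.normSq_apply]
    simp [Complex.exp_ofReal_mul_I_re, Complex.exp_ofReal_mul_I_im]
    nlinarith [sq_abs (Real.sin (θ/2))]
  exact (sq_eq_sq₀ (norm_nonneg _) (by positivity)).mp h1

lemma aux_normSq_den (θ r : ℝ) :
    Complex.normSq (1 - (r:ℂ)^2 * Complex.exp (θ * Complex.I)) =
      (1 - r^2)^2 + 4 * r^2 * |Real.sin (θ/2)|^2 := by
  have h2 := aux_cos θ
  have h3 := Real.sin_sq_add_cos_sq θ
  rw [Complex.normSq_apply]
  simp [Complex.exp_ofReal_mul_I_re, Complex.exp_ofReal_mul_I_im, ← Complex.ofReal_pow]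
  nlinarith [sq_abs (Real.sin (θ/2))]

lemma aux_num (θ : ℝ) (ξ : ℂ) :
    ‖ξ - Complex.exp (θ * Complex.I) * ξ‖ =
      2 * |Real.sin (θ/2)| * ‖ξ‖ := by
  have h : ξ - Complex.exp (θ * Complex.I) * ξ = (1 - Complex.exp (θ * Complex.I)) * ξ := by ring
  rw [h, norm_mul, aux_abs_one_sub_exp]

lemma aux_den (θ : ℝ) (ξ : ℂ) :
    ‖1 - (starRingEnd ℂ) ξ * (Complex.exp (θ * Complex.I) * ξ)‖ =
      Real.sqrt ((1 - ‖ξ‖^2)^2 + 4 * ‖ξ‖^2 * |Real.sin (θ/2)|^2) := by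
  have h : (starRingEnd ℂ) ξ * (Complex.exp (θ * Complex.I) * ξ) =
      ((‖ξ‖ : ℂ))^2 * Complex.exp (θ * Complex.I) := by
    rw [show (starRingEnd ℂ) ξ * (Complex.exp (θ * Complex.I) * ξ) =
      ((starRingEnd ℂ) ξ * ξ) * Complex.exp (θ * Complex.I) by ring]
    congr 1
    rw [mul_comm, Complex.mul_conj, Complex.normSq_eq_norm_sq]
    push_cast
    ring
  rw [h, Complex.norm_def, aux_normSq_den]

set_option maxHeartbeats 1000000 in
/-- for sufficiently small `ε` and `ξ` with `R = d_P(0,ξ)` sufficiently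
large: if `e^{−R} ≥ 8 ε⁻¹|sin(θ/2)|` then `d_P(ξ, e^{iθ}ξ) ≤ ε`, and if
`e^{−R} ≤ (1/4) ε⁻¹|sin(θ/2)|` then `d_P(ξ, e^{iθ}ξ) ≥ ε`. -/
theorem stmt14 :
    ∃ ε₀ : ℝ, 0 < ε₀ ∧ ∀ ε : ℝ, 0 < ε → ε < ε₀ → ∃ R₀ : ℝ,
      ∀ θ ∈ Set.Icc (-Real.pi) Real.pi, ∀ ξ ∈ unitDisc, R₀ ≤ poincareDist 0 ξ →
        (Real.exp (-poincareDist 0 ξ) ≥ 8 * ε⁻¹ * |Real.sin (θ / 2)| →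
          poincareDist ξ (Complex.exp (θ * Complex.I) * ξ) ≤ ε) ∧
        (Real.exp (-poincareDist 0 ξ) ≤ (1 / 4) * ε⁻¹ * |Real.sin (θ / 2)| →
          ε ≤ poincareDist ξ (Complex.exp (θ * Complex.I) * ξ)) := by
  refine ⟨1/2, by norm_num, fun ε hε hε2 => ⟨Real.log 7, fun θ hθ ξ hξ hR => ?_⟩⟩
  set r : ℝ := ‖ξ‖ with hrdef
  set s : ℝ := |Real.sin (θ/2)| with hsdef
  have hr0 : 0 ≤ r := norm_nonneg ξ
  have hr1 : r < 1 := hξ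
  have hs0 : 0 ≤ s := abs_nonneg _
  set t : ℝ := 1 - r^2 with htdef
  have ht : 0 < t := by nlinarith
  set D : ℝ := Real.sqrt (t^2 + 4*r^2*s^2) with hDdef
  have hD2 : D^2 = t^2 + 4*r^2*s^2 := Real.sq_sqrt (by positivity)
  have hDpos : 0 < D := Real.sqrt_pos.mpr (by positivity)
  have hDt : t ≤ D := by
    have h := Real.sqrt_le_sqrt (show t^2 ≤ t^2 + 4*r^2*s^2 by nlinarith)
    rwa [Real.sqrt_sq ht.le] at h
  -- the distance from 0
  have hR0 : poincareDist 0 ξ = Real.log ((1 + r)/(1 - r)) := by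
    simp [poincareDist, hrdef]
  have hfrac : (0:ℝ) < (1 + r)/(1 - r) := div_pos (by linarith) (by linarith)
  have hexp : Real.exp (-poincareDist 0 ξ) = (1 - r)/(1 + r) := by
    rw [hR0, Real.exp_neg, Real.exp_log hfrac, inv_div]
  -- the distance between rotated points
  set ρ : ℝ := 2 * s * r / D with hρdef
  have hρ0 : 0 ≤ ρ := by positivity
  have hρ1 : ρ < 1 := by
    rw [hρdef, div_lt_one hDpos]
    have : (2*s*r)^2 < D^2 := by nlinarith
    exact lt_of_pow_lt_pow_left₀ 2 hDpos.le this
  have hd : poincareDist ξ (Complex.exp (θ * Complex.I) * ξ) =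
      Real.log ((1 + ρ)/(1 - ρ)) := by
    unfold poincareDist
    rw [aux_num, aux_den, ← hsdef, ← hrdef, ← htdef, ← hDdef, ← hρdef]
  -- r ≥ 3/4 from R ≥ log 7
  have hr34 : (3:ℝ)/4 ≤ r := by
    have h7 : (7:ℝ) ≤ (1 + r)/(1 - r) := by
      have := Real.exp_le_exp.mpr (hR0 ▸ hR)
      rwa [Real.exp_log (by norm_num), Real.exp_log hfrac] at this
    rw [le_div_iff₀ (by linarith)] at h7
    linarith
  clear_value r s t D ρ
  constructor
  · -- first implication
    intro h1
    rw [hexp] at h1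
    have hεinv : ε * ε⁻¹ = 1 := mul_inv_cancel₀ hε.ne'
    have ht8 : 8 * ε⁻¹ * s ≤ t := by
      have : 8 * ε⁻¹ * s ≤ (1 - r)/(1 + r) := h1
      have h2 : (1 - r)/(1 + r) ≤ (1 - r)*(1 + r) := by
        rw [div_le_iff₀ (by linarith)]
        nlinarith
      nlinarith
    have hst : 8 * s ≤ ε * t := by
      have := mul_le_mul_of_nonneg_left ht8 hε.le
      calc 8 * s = ε * (8 * ε⁻¹ * s) := by
            rw [show ε * (8 * ε⁻¹ * s) = (ε * ε⁻¹) * (8 * s) by ring, hεinv]; ring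
        _ ≤ ε * t := this
    have hρε : ρ ≤ ε/4 := by
      rw [hρdef, div_le_iff₀ hDpos]
      have hsr : 2 * s * r ≤ 2 * s := by nlinarith
      have h4 : 8 * s ≤ ε * D := by nlinarith [mul_nonneg hε.le (sub_nonneg.mpr hDt)]
      nlinarith
    rw [hd]
    have hρ18 : ρ < 1/8 := by linarith
    have hx : (0:ℝ) < (1 + ρ)/(1 - ρ) := by
      apply div_pos <;> linarith
    have hlog := Real.log_le_sub_one_of_pos hx
    have : (1 + ρ)/(1 - ρ) - 1 ≤ ε := by
      rw [div_sub_one (by linarith : (1:ℝ) - ρ ≠ 0), div_le_iff₀ (by linarith)]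
      nlinarith
    linarith
  · -- second implication
    intro h2
    rw [hexp] at h2
    have hεinv : ε * ε⁻¹ = 1 := mul_inv_cancel₀ hε.ne'
    have hεt : ε * t ≤ s := by
      have hqnn : (0:ℝ) ≤ (1 - r)/(1 + r) := div_nonneg (by linarith) (by linarith)
      have hteq : t = ((1 - r)/(1 + r)) * (1 + r)^2 := by
        rw [htdef]
        field_simp
        ring
      have ha : t ≤ 4 * ((1 - r)/(1 + r)) := by
        rw [hteq]
        nlinarith [mul_le_mul_of_nonneg_left (show (1+r)^2 ≤ 4 by nlinarith) hqnn]
      have hb : t ≤ 4 * (1/4 * ε⁻¹ * s) := by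
        calc t ≤ 4 * ((1 - r)/(1 + r)) := ha
          _ ≤ 4 * (1/4 * ε⁻¹ * s) := by linarith
      have : ε * t ≤ ε * (ε⁻¹ * s) := by
        have : t ≤ ε⁻¹ * s := by linarith
        nlinarith
      calc ε * t ≤ ε * (ε⁻¹ * s) := this
        _ = (ε * ε⁻¹) * s := by ring
        _ = s := by rw [hεinv]; ring
    have hερ : ε ≤ ρ := by
      rw [hρdef, le_div_iff₀ hDpos]
      have hsq : (ε * D)^2 ≤ (2 * s * r)^2 := by
        rw [mul_pow, hD2]
        have h1 : (ε*t)^2 ≤ s^2 := by nlinarith [mul_nonneg hε.le ht.le]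
        nlinarith [h1, mul_nonneg (sq_nonneg s) (show (0:ℝ) ≤ r^2 - 9/16 by nlinarith),
          mul_nonneg (sq_nonneg s) (show (0:ℝ) ≤ 1/4 - ε^2 by nlinarith),
          mul_nonneg (mul_nonneg (sq_nonneg s) (show (0:ℝ) ≤ r^2 - 9/16 by nlinarith))
            (show (0:ℝ) ≤ 1/4 - ε^2 by nlinarith), sq_nonneg s]
      exact le_of_pow_le_pow_left₀ (by norm_num) (by positivity) hsq
    rw [hd]
    have hy : (0:ℝ) < (1 - ρ)/(1 + ρ) := by
      apply div_pos <;> linarith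
    have hlog := Real.log_le_sub_one_of_pos hy
    have heq : Real.log ((1 + ρ)/(1 - ρ)) = - Real.log ((1 - ρ)/(1 + ρ)) := by
      rw [← Real.log_inv, inv_div]
    rw [heq]
    have h3 : (1 - ρ)/(1 + ρ) ≤ 1 - ρ := by
      rw [div_le_iff₀ (by linarith)]
      nlinarith
    linarith
end

section
/- Let 𝔻 be the Poincaré disk and for R > 0 let 𝔻_R = {ξ : d_P(0,ξ) < R}. Suppose τ_a, τ_b ∈ Aut(𝔻) with τ_a(0) = a, τ_b(0) = b. If sup_{ξ ∈ closure(𝔻_R)} d_P(τ_a(ξ), τ_b(ξ)) ≤ ε, then d_P(a,b) ≤ ε. Conversely, there is a constant A > 1 (depending only on ε, for ε sufficiently small) such that: if d_P(a,b) ≤ A⁻¹ e^{−R}, then there exist automorphisms τ_a, τ_b of 𝔻 with τ_a(0) = a, τ_b(0) = b and sup_{ξ ∈ closure(𝔻_R)} d_P(τ_a(ξ), τ_b(ξ)) ≤ ε. -/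
/-- A holomorphic automorphism of the unit disk. -/
def IsDiscAut (τ : ℂ → ℂ) : Prop :=
  DifferentiableOn ℂ τ unitDisc ∧ Set.BijOn τ unitDisc unitDisc

namespace Stmt17Aux

lemma normSq_key (a b : ℂ) :
    Complex.normSq (1 - (starRingEnd ℂ) a * b) - Complex.normSq (a - b)
      = (1 - Complex.normSq a) * (1 - Complex.normSq b) := by
  simp only [Complex.normSq_apply, Complex.sub_re, Complex.sub_im, Complex.mul_re,
    Complex.mul_im, Complex.one_re, Complex.one_im, Complex.conj_re, Complex.conj_im]
  ring

lemma abs_sub_lt (a b : ℂ) (ha : ‖a‖ < 1) (hb : ‖b‖ < 1) :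
    ‖a - b‖ < ‖1 - (starRingEnd ℂ) a * b‖ := by
  have h := normSq_key a b
  have ha' : Complex.normSq a < 1 := by
    have := Complex.sq_norm a; nlinarith [norm_nonneg a]
  have hb' : Complex.normSq b < 1 := by
    have := Complex.sq_norm b; nlinarith [norm_nonneg b]
  have h2 : ‖a - b‖ ^ 2 < ‖1 - (starRingEnd ℂ) a * b‖ ^ 2 := by
    rw [Complex.sq_norm, Complex.sq_norm]; nlinarith
  exact lt_of_pow_lt_pow_left₀ 2 (norm_nonneg _) h2

lemma denom_pos (a b : ℂ) (ha : ‖a‖ < 1) (hb : ‖b‖ < 1) :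
    0 < ‖1 - (starRingEnd ℂ) a * b‖ :=
  lt_of_le_of_lt (norm_nonneg _) (abs_sub_lt a b ha hb)

noncomputable def mob (a : ℂ) (z : ℂ) : ℂ := (z + a) / (1 + (starRingEnd ℂ) a * z)

lemma mob_denom_ne (a z : ℂ) (ha : ‖a‖ < 1) (hz : ‖z‖ < 1) :
    1 + (starRingEnd ℂ) a * z ≠ 0 := by
  intro h
  have h1 : (starRingEnd ℂ) a * z = -1 := by linear_combination h
  have := congrArg (‖·‖) h1
  rw [norm_mul, Complex.norm_conj, norm_neg, norm_one] at this
  nlinarith [norm_nonneg a, norm_nonneg z]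

lemma mob_mem (a z : ℂ) (ha : ‖a‖ < 1) (hz : ‖z‖ < 1) :
    ‖mob a z‖ < 1 := by
  have h := abs_sub_lt a (-z) ha (by rwa [norm_neg])
  have h2 : a - -z = z + a := by ring
  have h3 : 1 - (starRingEnd ℂ) a * (-z) = 1 + (starRingEnd ℂ) a * z := by ring
  rw [h2, h3] at h
  have hd : 0 < ‖1 + (starRingEnd ℂ) a * z‖ :=
    lt_of_le_of_lt (norm_nonneg _) h
  rw [mob, norm_div, div_lt_one hd]
  exact h

lemma mob_mob (a z : ℂ) (ha : ‖a‖ < 1) (hz : ‖z‖ < 1) :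
    mob (-a) (mob a z) = z := by
  have hd := mob_denom_ne a z ha hz
  have hd2 : 1 + (starRingEnd ℂ) (-a) * mob a z ≠ 0 :=
    mob_denom_ne (-a) (mob a z) (by rwa [norm_neg]) (mob_mem a z ha hz)
  simp only [mob, map_neg, neg_mul] at hd2 ⊢
  rw [← sub_eq_add_neg] at hd2 ⊢
  field_simp [hd] at hd2 ⊢
  rw [sub_eq_add_neg] at hd2
  rw [div_eq_iff (div_ne_zero_iff.mp hd2).1]
  ring

lemma mob_zero (a : ℂ) : mob a 0 = a := by simp [mob]

lemma mob_aut (a : ℂ) (ha : ‖a‖ < 1) : IsDiscAut (mob a) := by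
  constructor
  · have : DifferentiableOn ℂ
        (fun z : ℂ => (z + a) / (1 + (starRingEnd ℂ) a * z)) unitDisc := by
      apply DifferentiableOn.div
      · exact (differentiable_id.add_const a).differentiableOn
      · exact ((differentiable_const (1:ℂ)).add
          ((differentiable_const _).mul differentiable_id)).differentiableOn
      · intro z hz; exact mob_denom_ne a z ha hz
    exact this
  · refine Set.InvOn.bijOn ⟨fun z hz => mob_mob a z ha hz, fun w hw => ?_⟩
      (fun z hz => mob_mem a z ha hz)
      (fun w hw => mob_mem (-a) w (by rwa [norm_neg]) hw)
    have := mob_mob (-a) w (by rwa [norm_neg]) hw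
    rwa [neg_neg] at this

lemma mob_ratio (a b ξ : ℂ) (ha : ‖a‖ < 1) (hb : ‖b‖ < 1)
    (hξ : ‖ξ‖ < 1) :
    ‖mob a ξ - mob b ξ‖ / ‖1 - (starRingEnd ℂ) (mob a ξ) * mob b ξ‖
      = ‖((starRingEnd ℂ) b - (starRingEnd ℂ) a) * ξ ^ 2
          + (a * (starRingEnd ℂ) b - (starRingEnd ℂ) a * b) * ξ + (a - b)‖
        / ‖(1 - (starRingEnd ℂ) a * b)
          - (1 - a * (starRingEnd ℂ) b) * (ξ * (starRingEnd ℂ) ξ)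
          + (((starRingEnd ℂ) b - (starRingEnd ℂ) a) * ξ + (a - b) * (starRingEnd ℂ) ξ)‖ := by
  have hda := mob_denom_ne a ξ ha hξ
  have hdb := mob_denom_ne b ξ hb hξ
  have hda' : (starRingEnd ℂ) (1 + (starRingEnd ℂ) a * ξ) ≠ 0 :=
    fun h => hda (by simpa using congrArg (starRingEnd ℂ) h)
  have h1 : mob a ξ - mob b ξ
      = (((starRingEnd ℂ) b - (starRingEnd ℂ) a) * ξ ^ 2
          + (a * (starRingEnd ℂ) b - (starRingEnd ℂ) a * b) * ξ + (a - b))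
        / ((1 + (starRingEnd ℂ) a * ξ) * (1 + (starRingEnd ℂ) b * ξ)) := by
    rw [mob, mob, div_sub_div _ _ hda hdb]
    rw [div_eq_div_iff (mul_ne_zero hda hdb) (mul_ne_zero hda hdb)]
    ring
  have h2 : 1 - (starRingEnd ℂ) (mob a ξ) * mob b ξ
      = ((1 - (starRingEnd ℂ) a * b)
          - (1 - a * (starRingEnd ℂ) b) * (ξ * (starRingEnd ℂ) ξ)
          + (((starRingEnd ℂ) b - (starRingEnd ℂ) a) * ξ + (a - b) * (starRingEnd ℂ) ξ))
        / ((starRingEnd ℂ) (1 + (starRingEnd ℂ) a * ξ) * (1 + (starRingEnd ℂ) b * ξ)) := by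
    rw [mob, mob, map_div₀, div_mul_div_comm, one_sub_div (mul_ne_zero hda' hdb)]
    congr 1
    simp only [map_add, map_mul, map_one, Complex.conj_conj]
    ring
  rw [h1, h2, norm_div, norm_div, norm_mul, norm_mul, Complex.norm_conj]
  rw [div_div_div_comm, div_self
    (mul_ne_zero (norm_ne_zero_iff.mpr hda) (norm_ne_zero_iff.mpr hdb)), div_one]

lemma ratio_le_pd (a b : ℂ) (ha : ‖a‖ < 1) (hb : ‖b‖ < 1) :
    ‖a - b‖ / ‖1 - (starRingEnd ℂ) a * b‖ ≤ poincareDist a b := by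
  set δ := ‖a - b‖ / ‖1 - (starRingEnd ℂ) a * b‖ with hδdef
  have hD := denom_pos a b ha hb
  have hδ0 : 0 ≤ δ := div_nonneg (norm_nonneg _) (norm_nonneg _)
  have hδ1 : δ < 1 := (div_lt_one hD).mpr (abs_sub_lt a b ha hb)
  have hkey : Real.exp δ ≤ (1 + δ) / (1 - δ) := by
    rw [le_div_iff₀ (by linarith)]
    have h1 : (1:ℝ) - δ ≤ Real.exp (-δ) := by nlinarith [Real.add_one_le_exp (-δ)]
    calc Real.exp δ * (1 - δ) ≤ Real.exp δ * Real.exp (-δ) :=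
          mul_le_mul_of_nonneg_left h1 (Real.exp_pos δ).le
      _ = 1 := by rw [← Real.exp_add]; simp
      _ ≤ 1 + δ := by linarith
  have := Real.log_le_log (Real.exp_pos δ) hkey
  rwa [Real.log_exp] at this

lemma pd_radius (ξ : ℂ) (R : ℝ) (hξ : ‖ξ‖ < 1) (hR : 0 ≤ R)
    (h : poincareDist 0 ξ ≤ R) : Real.exp (-R) ≤ 1 - ‖ξ‖ := by
  set t := ‖ξ‖ with htdef
  have ht0 : 0 ≤ t := norm_nonneg _
  have heq : poincareDist 0 ξ = Real.log ((1 + t) / (1 - t)) := by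
    simp only [poincareDist, map_zero, zero_mul, sub_zero, map_one, norm_one, div_one, zero_sub,
      norm_neg, ← htdef]
  have hpos : 0 < (1 + t) / (1 - t) := div_pos (by linarith) (by linarith)
  rw [heq] at h
  have h1 : (1 + t) / (1 - t) ≤ Real.exp R := (Real.log_le_iff_le_exp hpos).mp h
  have h2 : 1 + t ≤ Real.exp R * (1 - t) := by
    rw [div_le_iff₀ (by linarith)] at h1; linarith
  have hE : Real.exp (-R) * Real.exp R = 1 := by rw [← Real.exp_add]; simp
  nlinarith [mul_le_mul_of_nonneg_left h2 (Real.exp_pos (-R)).le, Real.exp_pos (-R)]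

lemma pd_le_bound (u v : ℂ) (r : ℝ)
    (h : ‖u - v‖ / ‖1 - (starRingEnd ℂ) u * v‖ ≤ r)
    (hr : r < 1) : poincareDist u v ≤ 2 * r / (1 - r) := by
  set ρ := ‖u - v‖ / ‖1 - (starRingEnd ℂ) u * v‖ with hρdef
  have hρ0 : 0 ≤ ρ := div_nonneg (norm_nonneg _) (norm_nonneg _)
  have hρ1 : ρ < 1 := lt_of_le_of_lt h hr
  have hpos : 0 < (1 + ρ) / (1 - ρ) := div_pos (by linarith) (by linarith)
  have hlog : Real.log ((1 + ρ) / (1 - ρ)) ≤ (1 + ρ) / (1 - ρ) - 1 :=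
    Real.log_le_sub_one_of_pos hpos
  have hne : (1:ℝ) - ρ ≠ 0 := by linarith
  have heq : (1 + ρ) / (1 - ρ) - 1 = 2 * ρ / (1 - ρ) := by
    rw [eq_div_iff hne, sub_mul, div_mul_cancel₀ _ hne]; ring
  have hmono : 2 * ρ / (1 - ρ) ≤ 2 * r / (1 - r) :=
    div_le_div₀ (by linarith) (by linarith) (by linarith) (by linarith)
  calc poincareDist u v = Real.log ((1 + ρ) / (1 - ρ)) := rfl
    _ ≤ (1 + ρ) / (1 - ρ) - 1 := hlog
    _ = 2 * ρ / (1 - ρ) := heq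
    _ ≤ 2 * r / (1 - r) := hmono

end Stmt17Aux

open Stmt17Aux

/-- two automorphisms close on a large hyperbolic disk have close values
at `0`; conversely (Dinh–Nguyên–Sibony), if `d_P(a,b) ≤ A⁻¹e^{−R}` one can choose
automorphisms sending `0` to `a` resp. `b` which are `ε`-close on the hyperbolic disk of
radius `R`. -/
theorem stmt17 :
    (∀ (ε R : ℝ), 0 < ε → 0 < R → ∀ a ∈ unitDisc, ∀ b ∈ unitDisc,
      ∀ τa τb : ℂ → ℂ, IsDiscAut τa → IsDiscAut τb → τa 0 = a → τb 0 = b →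
        (∀ ξ ∈ unitDisc, poincareDist 0 ξ ≤ R → poincareDist (τa ξ) (τb ξ) ≤ ε) →
        poincareDist a b ≤ ε) ∧
    ∃ ε₀ : ℝ, 0 < ε₀ ∧ ∀ ε : ℝ, 0 < ε → ε < ε₀ → ∃ A : ℝ, 1 < A ∧
      ∀ R : ℝ, 0 < R → ∀ a ∈ unitDisc, ∀ b ∈ unitDisc,
        poincareDist a b ≤ A⁻¹ * Real.exp (-R) →
        ∃ τa τb : ℂ → ℂ, IsDiscAut τa ∧ IsDiscAut τb ∧ τa 0 = a ∧ τb 0 = b ∧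
          ∀ ξ ∈ unitDisc, poincareDist 0 ξ ≤ R → poincareDist (τa ξ) (τb ξ) ≤ ε := by
  constructor
  · intro ε R hε hR a ha b hb τa τb _ _ h0a h0b hsup
    have h0 : (0:ℂ) ∈ unitDisc := by simp [unitDisc]
    have hpd0 : poincareDist 0 0 = 0 := by norm_num [poincareDist]
    have := hsup 0 h0 (by rw [hpd0]; exact hR.le)
    rwa [h0a, h0b] at this
  · refine ⟨1, one_pos, fun ε hε hε1 => ⟨100 / ε, ?_, fun R hR a ha b hb hdist => ?_⟩⟩
    · rw [lt_div_iff₀ hε]; linarith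
    · have ha' : ‖a‖ < 1 := ha
      have hb' : ‖b‖ < 1 := hb
      refine ⟨mob a, mob b, mob_aut a ha', mob_aut b hb', mob_zero a, mob_zero b, ?_⟩
      intro ξ hξ hξR
      have hξ' : ‖ξ‖ < 1 := hξ
      have ht0 : 0 ≤ ‖ξ‖ := norm_nonneg _
      have hD : 0 < ‖1 - (starRingEnd ℂ) a * b‖ := denom_pos a b ha' hb'
      have hδle : ‖a - b‖ / ‖1 - (starRingEnd ℂ) a * b‖
          ≤ ε / 100 * Real.exp (-R) := by
        calc ‖a - b‖ / ‖1 - (starRingEnd ℂ) a * b‖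
            ≤ poincareDist a b := ratio_le_pd a b ha' hb'
          _ ≤ (100 / ε)⁻¹ * Real.exp (-R) := hdist
          _ = ε / 100 * Real.exp (-R) := by rw [inv_div]
      have habD : ‖a - b‖
          ≤ ε / 100 * Real.exp (-R) * ‖1 - (starRingEnd ℂ) a * b‖ :=
        (div_le_iff₀ hD).mp hδle
      have htR : Real.exp (-R) ≤ 1 - ‖ξ‖ := pd_radius ξ R hξ' hR.le hξR
      -- conjugation identities
      have hab : ‖(starRingEnd ℂ) b - (starRingEnd ℂ) a‖ = ‖a - b‖ := by
        rw [← map_sub, Complex.norm_conj, norm_sub_rev]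
      have habconj : ‖1 - a * (starRingEnd ℂ) b‖
          = ‖1 - (starRingEnd ℂ) a * b‖ := by
        have h : (starRingEnd ℂ) (1 - (starRingEnd ℂ) a * b) = 1 - a * (starRingEnd ℂ) b := by
          simp [map_sub, map_mul]
        rw [← h, Complex.norm_conj]
      have hcross : ‖a * (starRingEnd ℂ) b - (starRingEnd ℂ) a * b‖
          ≤ 2 * ‖a - b‖ := by
        have hid : a * (starRingEnd ℂ) b - (starRingEnd ℂ) a * b
            = a * ((starRingEnd ℂ) b - (starRingEnd ℂ) a) + (starRingEnd ℂ) a * (a - b) := by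
          ring
        rw [hid]
        have h1 := norm_add_le (a * ((starRingEnd ℂ) b - (starRingEnd ℂ) a))
          ((starRingEnd ℂ) a * (a - b))
        rw [norm_mul, norm_mul, hab, Complex.norm_conj] at h1
        nlinarith [norm_nonneg (a - b), norm_nonneg a]
      -- numerator bound
      have hN1 : ‖((starRingEnd ℂ) b - (starRingEnd ℂ) a) * ξ ^ 2
            + (a * (starRingEnd ℂ) b - (starRingEnd ℂ) a * b) * ξ + (a - b)‖
          ≤ 4 * ‖a - b‖ := by
        have t1 := norm_add_le
          (((starRingEnd ℂ) b - (starRingEnd ℂ) a) * ξ ^ 2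
            + (a * (starRingEnd ℂ) b - (starRingEnd ℂ) a * b) * ξ) (a - b)
        have t2 := norm_add_le (((starRingEnd ℂ) b - (starRingEnd ℂ) a) * ξ ^ 2)
          ((a * (starRingEnd ℂ) b - (starRingEnd ℂ) a * b) * ξ)
        rw [norm_mul, norm_mul, norm_pow, hab] at t2
        have e1 : ‖a - b‖ * ‖ξ‖ ^ 2 ≤ ‖a - b‖ :=
          mul_le_of_le_one_right (norm_nonneg _) (pow_le_one₀ ht0 hξ'.le)
        have e2 : ‖a * (starRingEnd ℂ) b - (starRingEnd ℂ) a * b‖ * ‖ξ‖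
            ≤ 2 * ‖a - b‖ :=
          le_trans (mul_le_of_le_one_right (norm_nonneg _) hξ'.le) hcross
        linarith
      -- denominator bound
      have hN2 : ‖1 - (starRingEnd ℂ) a * b‖ * Real.exp (-R) / 2
          ≤ ‖(1 - (starRingEnd ℂ) a * b)
            - (1 - a * (starRingEnd ℂ) b) * (ξ * (starRingEnd ℂ) ξ)
            + (((starRingEnd ℂ) b - (starRingEnd ℂ) a) * ξ + (a - b) * (starRingEnd ℂ) ξ)‖ := by
        set X := (1 - (starRingEnd ℂ) a * b) - (1 - a * (starRingEnd ℂ) b) * (ξ * (starRingEnd ℂ) ξ)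
          with hXdef
        set Y := ((starRingEnd ℂ) b - (starRingEnd ℂ) a) * ξ + (a - b) * (starRingEnd ℂ) ξ
          with hYdef
        have hXY : ‖X‖ - ‖Y‖ ≤ ‖X + Y‖ := by
          have := norm_add_le (X + Y) (-Y)
          rw [add_neg_cancel_right, norm_neg] at this
          linarith
        have hX : ‖1 - (starRingEnd ℂ) a * b‖
            - ‖1 - (starRingEnd ℂ) a * b‖ * (‖ξ‖ * ‖ξ‖)
            ≤ ‖X‖ := by
          have := norm_add_le X ((1 - a * (starRingEnd ℂ) b) * (ξ * (starRingEnd ℂ) ξ))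
          rw [hXdef, sub_add_cancel, norm_mul, norm_mul, Complex.norm_conj, habconj] at this
          linarith
        have hY : ‖Y‖ ≤ 2 * ‖a - b‖ := by
          have := norm_add_le (((starRingEnd ℂ) b - (starRingEnd ℂ) a) * ξ)
            ((a - b) * (starRingEnd ℂ) ξ)
          rw [norm_mul, norm_mul, hab, Complex.norm_conj] at this
          nlinarith [norm_nonneg (a - b)]
        have h1t2 : Real.exp (-R) ≤ 1 - ‖ξ‖ * ‖ξ‖ := by nlinarith
        nlinarith [norm_nonneg X, Real.exp_pos (-R),
          mul_le_mul_of_nonneg_left h1t2 hD.le,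
          mul_nonneg (mul_nonneg (by linarith : (0:ℝ) ≤ 1 - ε) (Real.exp_pos (-R)).le) hD.le]
      have hN2pos : 0 < ‖(1 - (starRingEnd ℂ) a * b)
            - (1 - a * (starRingEnd ℂ) b) * (ξ * (starRingEnd ℂ) ξ)
            + (((starRingEnd ℂ) b - (starRingEnd ℂ) a) * ξ + (a - b) * (starRingEnd ℂ) ξ)‖ :=
        lt_of_lt_of_le (div_pos (mul_pos hD (Real.exp_pos _)) two_pos) hN2
      have hρ : ‖mob a ξ - mob b ξ‖
            / ‖1 - (starRingEnd ℂ) (mob a ξ) * mob b ξ‖ ≤ 2 * ε / 25 := by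
        rw [mob_ratio a b ξ ha' hb' hξ', div_le_iff₀ hN2pos]
        nlinarith [mul_le_mul_of_nonneg_left hN2 (by linarith : (0:ℝ) ≤ 2 * ε / 25),
          Real.exp_pos (-R), hD.le]
      have hfinal := pd_le_bound (mob a ξ) (mob b ξ) (2 * ε / 25) hρ (by linarith)
      calc poincareDist (mob a ξ) (mob b ξ) ≤ 2 * (2 * ε / 25) / (1 - 2 * ε / 25) := hfinal
        _ ≤ ε := by rw [div_le_iff₀ (by linarith)]; nlinarith
end
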